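/- Let u* be the minimizer of Σᵢ gᵢ exp(−Lᵢβuᵢ) over the simplex, with gᵢ, Lᵢ, β > 0, and sort indices so that g₍₁₎L₍₁₎ ≥ g₍₂₎L₍₂₎ ≥ … ≥ g₍M₎L₍M₎. Then the set of indices with u*₍ᵢ₎ > 0 is a prefix: there exists 1 ≤ r₀ ≤ M such that u*₍ₛ₎ > 0 for all s ≤ r₀ and u*₍ₛ₎ = 0 for s > r₀. -/

import Mathlib

set_option maxHeartbeats 1000000

open Finset

theorem stmt_8 (M : ℕ) (hM : 1 ≤ M) (g L : Fin M → ℝ) (β : ℝ)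
    (hg : ∀ i, 0 < g i) (hL : ∀ i, 0 < L i) (hβ : 0 < β)
    (hsorted : ∀ i j : Fin M, i ≤ j → g j * L j ≤ g i * L i)
    (u : Fin M → ℝ)
    (hu : u ∈ {u : Fin M → ℝ | (∀ i, 0 ≤ u i) ∧ ∑ i, u i = 1})
    (hmin : IsMinOn (fun v => ∑ i, g i * Real.exp (-(L i * β * v i)))
      {u : Fin M → ℝ | (∀ i, 0 ≤ u i) ∧ ∑ i, u i = 1} u) :
    ∃ r₀ : Fin M, (∀ s : Fin M, s ≤ r₀ → 0 < u s) ∧ (∀ s : Fin M, r₀ < s → u s = 0) := by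
  obtain ⟨hnn, hsum⟩ := hu
  -- key lemma: support is closed under moving to heavier indices
  have key : ∀ i j : Fin M, g j * L j ≤ g i * L i → i ≠ j → 0 < u j → 0 < u i := by
    intro i j hgl hij huj
    by_contra hui
    have hui0 : u i = 0 := le_antisymm (not_lt.mp hui) (hnn i)
    set a := L i * β with ha
    set b := L j * β with hb
    have ha0 : 0 < a := mul_pos (hL i) hβ
    have hb0 : 0 < b := mul_pos (hL j) hβ
    have hDK : g j * b ≤ g i * a := by
      rw [ha, hb]
      have := mul_le_mul_of_nonneg_right hgl hβ.le
      nlinarith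
    set K := g j * b * Real.exp (-(b * u j / 2)) with hK
    set D := g i * a with hD
    have hexp1 : Real.exp (-(b * u j / 2)) < 1 := by
      apply Real.exp_lt_one_iff.mpr
      nlinarith [mul_pos hb0 huj]
    have hgjb : 0 < g j * b := mul_pos (hg j) hb0
    have hgia : 0 < g i * a * a := mul_pos (mul_pos (hg i) ha0) ha0
    have hKD : K < D := by
      calc K < g j * b * 1 := mul_lt_mul_of_pos_left hexp1 hgjb
        _ = g j * b := by ring
        _ ≤ D := hDK
    set ε := min (u j / 2) ((D - K) / (2 * (g i * a * a))) with hε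
    have hε0 : 0 < ε := by
      apply lt_min (by linarith)
      apply div_pos (by linarith)
      linarith
    have hεuj : ε ≤ u j / 2 := min_le_left _ _
    have hεD : ε ≤ (D - K) / (2 * (g i * a * a)) := min_le_right _ _
    set v : Fin M → ℝ := fun k => if k = i then ε else if k = j then u j - ε else u k with hv
    have hji : j ≠ i := fun h => hij h.symm
    have hjmem : j ∈ (univ : Finset (Fin M)).erase i := by
      simp [Finset.mem_erase, hji]
    have hsplit : ∀ w : Fin M → ℝ,
        ∑ k, w k = ∑ k ∈ ((univ : Finset (Fin M)).erase i).erase j, w k + w j + w i := by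
      intro w
      rw [Finset.sum_erase_add _ _ hjmem, Finset.sum_erase_add _ _ (Finset.mem_univ i)]
    have hrest : ∀ (F : Fin M → ℝ → ℝ),
        ∑ k ∈ ((univ : Finset (Fin M)).erase i).erase j, F k (v k)
          = ∑ k ∈ ((univ : Finset (Fin M)).erase i).erase j, F k (u k) := by
      intro F
      apply Finset.sum_congr rfl
      intro k hk
      simp only [Finset.mem_erase] at hk
      simp [hv, hk.1, hk.2.1]
    have hvi : v i = ε := by simp [hv]
    have hvj : v j = u j - ε := by simp [hv, hji]
    have hvmem : v ∈ {u : Fin M → ℝ | (∀ i, 0 ≤ u i) ∧ ∑ i, u i = 1} := by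
      constructor
      · intro k
        by_cases hki : k = i
        · simp [hv, hki]; exact hε0.le
        · by_cases hkj : k = j
          · simp [hv, hki, hkj, hji]; linarith
          · simp [hv, hki, hkj]; exact hnn k
      · rw [hsplit v, hrest (fun _ x => x), hvi, hvj]
        have := hsplit u
        rw [this] at hsum
        linarith
    have hle := hmin hvmem
    simp only [Set.mem_setOf_eq] at hle
    rw [hsplit (fun k => g k * Real.exp (-(L k * β * v k))),
        hsplit (fun k => g k * Real.exp (-(L k * β * u k))),
        hrest (fun k x => g k * Real.exp (-(L k * β * x)))] at hle
    simp only [hvi, hvj, hui0, mul_zero, neg_zero, Real.exp_zero] at hle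
    have hle2 : g j * Real.exp (-(b * u j)) + g i * 1
        ≤ g j * Real.exp (-(b * (u j - ε))) + g i * Real.exp (-(a * ε)) := by
      linarith
    -- bound exp(-(a ε)) ≤ 1 - a ε + (a ε)^2
    have hE1 : Real.exp (-(a * ε)) ≤ 1 - a * ε + (a * ε)^2 := by
      have h1 : a * ε + 1 ≤ Real.exp (a * ε) := Real.add_one_le_exp _
      have h2 : Real.exp (-(a * ε)) * Real.exp (a * ε) = 1 := by
        rw [← Real.exp_add]; simp
      have h3 : 0 < Real.exp (-(a * ε)) := Real.exp_pos _
      nlinarith [mul_pos ha0 hε0, mul_le_mul_of_nonneg_left h1 h3.le]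
    -- bound exp(-(b (u j - ε))) ≤ exp(-(b u j)) + b ε exp(-(b u j / 2))
    have hE2 : Real.exp (-(b * (u j - ε))) ≤ Real.exp (-(b * u j)) + b * ε * Real.exp (-(b * u j / 2)) := by
      have h1 : 1 - b * ε ≤ Real.exp (-(b * ε)) := by
        have := Real.add_one_le_exp (-(b * ε)); linarith
      have h2 : Real.exp (-(b * (u j - ε))) = Real.exp (-(b * u j)) * Real.exp (b * ε) := by
        rw [← Real.exp_add]; ring_nf
      have h4 : (1 - b * ε) * Real.exp (b * ε) ≤ 1 := by
        calc (1 - b * ε) * Real.exp (b * ε) ≤ Real.exp (-(b * ε)) * Real.exp (b * ε) :=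
              mul_le_mul_of_nonneg_right h1 (Real.exp_pos _).le
          _ = 1 := by rw [← Real.exp_add]; simp
      have h5 : Real.exp (b * ε) ≤ 1 + b * ε * Real.exp (b * ε) := by nlinarith
      have h6 : Real.exp (-(b * u j)) * Real.exp (b * ε)
          ≤ Real.exp (-(b * u j)) + b * ε * (Real.exp (-(b * u j)) * Real.exp (b * ε)) := by
        nlinarith [Real.exp_pos (-(b * u j)), mul_pos hb0 hε0]
      have h8 : Real.exp (-(b * (u j - ε))) ≤ Real.exp (-(b * u j / 2)) := by
        apply Real.exp_le_exp.mpr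
        nlinarith
      nlinarith [mul_pos hb0 hε0]
    -- combine
    have hgi := hg i
    have hgj := hg j
    have hεbound : g i * a * a * ε ≤ (D - K) / 2 := by
      have h := mul_le_mul_of_nonneg_left hεD (le_of_lt hgia)
      have hne : g i * a * a ≠ 0 := ne_of_gt hgia
      have heq : g i * a * a * ((D - K) / (2 * (g i * a * a))) = (D - K) / 2 := by
        field_simp
      linarith
    have t1 : g i * Real.exp (-(a * ε)) ≤ g i * (1 - a * ε + (a * ε)^2) :=
      mul_le_mul_of_nonneg_left hE1 hgi.le
    have t2 : g j * Real.exp (-(b * (u j - ε)))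
        ≤ g j * (Real.exp (-(b * u j)) + b * ε * Real.exp (-(b * u j / 2))) :=
      mul_le_mul_of_nonneg_left hE2 hgj.le
    have hint1 : g i * a * a * ε * ε ≤ (D - K) / 2 * ε :=
      mul_le_mul_of_nonneg_right hεbound hε0.le
    have hint2 : 0 < ε * (D - K) := mul_pos hε0 (sub_pos.mpr hKD)
    nlinarith [hle2, t1, t2, hint1, hint2, hK, hD]
  -- existence of a positive coordinate
  have hex : ∃ s : Fin M, 0 < u s := by
    by_contra h
    push_neg at h
    have : ∀ s, u s = 0 := fun s => le_antisymm (h s) (hnn s)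
    rw [Finset.sum_congr rfl (fun s _ => this s)] at hsum
    simp at hsum
  set S : Finset (Fin M) := univ.filter (fun s => 0 < u s) with hS
  have hSne : S.Nonempty := by
    obtain ⟨s, hs⟩ := hex
    exact ⟨s, by simp [hS, hs]⟩
  refine ⟨S.max' hSne, ?_, ?_⟩
  · intro s hs
    have hr : 0 < u (S.max' hSne) := by
      have := S.max'_mem hSne
      simp [hS] at this
      exact this
    rcases eq_or_lt_of_le hs with h | h
    · rwa [h]
    · exact key s (S.max' hSne) (hsorted s _ hs) (ne_of_lt h) hr
  · intro s hs
    by_contra h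
    have hpos : 0 < u s := (hnn s).lt_of_ne (Ne.symm h)
    have : s ∈ S := by simp [hS, hpos]
    have := S.le_max' s this
    exact absurd hs (not_lt.mpr this)
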